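/- For any Boolean function f on n variables, Γ(f) ≤ 2^n − 1, witnessed by the function g(b) = 2^n − 1 if b contains a certificate of f, and g(b) = Σ_{i=1}^{w(b)} 2^{n−i} otherwise, where w(b) is the number of non-* coordinates of b; this g is monotone and submodular. -/

import Mathlib

attribute [local instance] Classical.propDecidable

/-- `b'` extends the partial assignment `b`: it agrees on all non-`*` coordinates of `b`. -/
def Extends {n : ℕ} (b' b : Fin n → Option Bool) : Prop :=
  ∀ i v, b i = some v → b' i = some v

/-- A total assignment `x` extends the partial assignment `b`. -/
def TExtends {n : ℕ} (x : Fin n → Bool) (b : Fin n → Option Bool) : Prop :=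
  ∀ i v, b i = some v → x i = v

/-- `b` is a certificate of `f`: `f` is constant on all total extensions of `b`. -/
def IsCert {n : ℕ} (f : (Fin n → Bool) → Bool) (b : Fin n → Option Bool) : Prop :=
  ∀ x y, TExtends x b → TExtends y b → f x = f y

/-- `b` is a `k`-certificate of `f`: it forces `f` to the value `k`. -/
def IsKCert {n : ℕ} (f : (Fin n → Bool) → Bool) (k : Bool) (b : Fin n → Option Bool) : Prop :=
  ∀ x, TExtends x b → f x = k

/-- A certificate is minimal if no proper restriction of it is a certificate. -/
def MinCert {n : ℕ} (f : (Fin n → Bool) → Bool) (c : Fin n → Option Bool) : Prop :=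
  IsCert f c ∧ ∀ c', Extends c c' → c' ≠ c → ¬ IsCert f c'

/-- A `k`-certificate is minimal if no proper restriction of it is a `k`-certificate. -/
def MinKCert {n : ℕ} (f : (Fin n → Bool) → Bool) (k : Bool) (c : Fin n → Option Bool) : Prop :=
  IsKCert f k c ∧ ∀ c', Extends c c' → c' ≠ c → ¬ IsKCert f k c'

/-- Monotone utility function: filling in `*`'s never decreases the value. -/
def Mono {n : ℕ} (g : (Fin n → Option Bool) → ℕ) : Prop :=
  ∀ b b', Extends b' b → g b ≤ g b'

/-- Submodular utility function: marginal gains shrink under extension. -/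
def Submod {n : ℕ} (g : (Fin n → Option Bool) → ℕ) : Prop :=
  ∀ b b' (i : Fin n) (ℓ : Bool), Extends b' b → b i = none → b' i = none →
    g (Function.update b' i (some ℓ)) + g b ≤ g (Function.update b i (some ℓ)) + g b'

/-- `g` is a goal function for `f` with goal value `Q`. -/
def GoalFn {n : ℕ} (f : (Fin n → Bool) → Bool) (g : (Fin n → Option Bool) → ℕ)
    (Q : ℕ) : Prop :=
  Mono g ∧ Submod g ∧ ∀ b, g b = Q ↔ IsCert f b

/-- `g` is a `k`-goal function for `f` with goal value `Q`. -/
def KGoalFn {n : ℕ} (f : (Fin n → Bool) → Bool) (k : Bool)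
    (g : (Fin n → Option Bool) → ℕ) (Q : ℕ) : Prop :=
  Mono g ∧ Submod g ∧ (∀ b, IsKCert f k b → g b = Q) ∧ (∀ b, ¬ IsKCert f k b → g b < Q)

/-- The goal value `Γ(f)`: the minimum goal value of any goal function for `f`. -/
noncomputable def gamma {n : ℕ} (f : (Fin n → Bool) → Bool) : ℕ :=
  sInf {Q | ∃ g, GoalFn f g Q}

/-- The `k`-goal value `Γ^k(f)`. -/
noncomputable def gammaK {n : ℕ} (f : (Fin n → Bool) → Bool) (k : Bool) : ℕ :=
  sInf {Q | ∃ g, KGoalFn f k g Q}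

/-- The weight of a partial assignment: the number of non-`*` coordinates. -/
noncomputable def wt {n : ℕ} (b : Fin n → Option Bool) : ℕ :=
  (Finset.univ.filter (fun i => (b i).isSome)).card

/-- `f` depends on its `i`-th variable. -/
def BoolDependsOn {n : ℕ} (f : (Fin n → Bool) → Bool) (i : Fin n) : Prop :=
  ∃ x, f (Function.update x i true) ≠ f (Function.update x i false)

section Aux

variable {n : ℕ}

lemma Sval (n : ℕ) : ∀ w, w ≤ n → ∑ i ∈ Finset.Icc 1 w, 2 ^ (n - i) = 2 ^ n - 2 ^ (n - w)
  | 0, _ => by simp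
  | (w + 1), h => by
    rw [Finset.sum_Icc_succ_top (by omega), Sval n w (by omega)]
    have h1 : 2 ^ (n - w) = 2 * 2 ^ (n - (w + 1)) := by
      rw [← pow_succ']
      congr 1
      omega
    have h2 : 2 ^ (n - w) ≤ 2 ^ n := Nat.pow_le_pow_right (by norm_num) (by omega)
    omega

lemma wt_le (b : Fin n → Option Bool) : wt b ≤ n := by
  unfold wt
  calc (Finset.univ.filter (fun i => (b i).isSome)).card ≤ Finset.univ.card :=
        Finset.card_filter_le _ _
    _ = n := by simp

lemma filter_subset_of_extends {b b' : Fin n → Option Bool} (h : Extends b' b) :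
    (Finset.univ.filter (fun i => (b i).isSome)) ⊆
      (Finset.univ.filter (fun i => (b' i).isSome)) := by
  intro i hi
  simp only [Finset.mem_filter, Finset.mem_univ, true_and] at *
  obtain ⟨v, hv⟩ := Option.isSome_iff_exists.mp hi
  rw [h i v hv]
  rfl

lemma wt_mono {b b' : Fin n → Option Bool} (h : Extends b' b) : wt b ≤ wt b' :=
  Finset.card_le_card (filter_subset_of_extends h)

lemma wt_update {b : Fin n → Option Bool} {i : Fin n} (hb : b i = none) (ℓ : Bool) :
    wt (Function.update b i (some ℓ)) = wt b + 1 := by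
  unfold wt
  have hset : Finset.univ.filter (fun j => (Function.update b i (some ℓ) j).isSome)
      = insert i (Finset.univ.filter (fun j => (b j).isSome)) := by
    ext j
    by_cases hj : j = i <;> simp [Function.update_apply, hj, hb]
  rw [hset, Finset.card_insert_of_notMem (by simp [hb])]

lemma wt_lt {b : Fin n → Option Bool} {i : Fin n} (hb : b i = none) : wt b < n := by
  have h1 := wt_update hb true
  have h2 := wt_le (Function.update b i (some true))
  omega

lemma cert_of_total {f : (Fin n → Bool) → Bool} {b : Fin n → Option Bool}
    (h : wt b = n) : IsCert f b := by
  have huniv : Finset.univ.filter (fun i => (b i).isSome) = Finset.univ :=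
    Finset.eq_univ_of_card _ (by simpa [wt] using h)
  have hall : ∀ i, (b i).isSome := by
    intro i
    have : i ∈ Finset.univ.filter (fun i => (b i).isSome) := by
      rw [huniv]; exact Finset.mem_univ i
    simpa using this
  intro x y hx hy
  have : x = y := funext fun i => by
    obtain ⟨v, hv⟩ := Option.isSome_iff_exists.mp (hall i)
    rw [hx i v hv, hy i v hv]
  rw [this]

lemma eq_of_ext_wt {b b' : Fin n → Option Bool} (h : Extends b' b)
    (hw : wt b' ≤ wt b) : b' = b := by
  have heq : Finset.univ.filter (fun i => (b i).isSome)
      = Finset.univ.filter (fun i => (b' i).isSome) :=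
    Finset.eq_of_subset_of_card_le (filter_subset_of_extends h) hw
  funext i
  cases hbi : b i with
  | some v => rw [h i v hbi]
  | none =>
    cases hbi' : b' i with
    | none => rfl
    | some v =>
      have hmem : i ∈ Finset.univ.filter (fun i => (b' i).isSome) := by simp [hbi']
      rw [← heq] at hmem
      simp [hbi] at hmem

lemma cert_mono {f : (Fin n → Bool) → Bool} {b b' : Fin n → Option Bool}
    (hc : IsCert f b) (h : Extends b' b) : IsCert f b' := by
  intro x y hx hy
  exact hc x y (fun i v hv => hx i v (h i v hv)) (fun i v hv => hy i v (h i v hv))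

lemma update_extends {b : Fin n → Option Bool} {i : Fin n} (hb : b i = none) (ℓ : Bool) :
    Extends (Function.update b i (some ℓ)) b := by
  intro j v hv
  have hj : j ≠ i := by rintro rfl; rw [hb] at hv; cases hv
  rw [Function.update_apply, if_neg hj]
  exact hv

lemma extends_update_update {b b' : Fin n → Option Bool} {i : Fin n} (h : Extends b' b)
    (ℓ : Bool) :
    Extends (Function.update b' i (some ℓ)) (Function.update b i (some ℓ)) := by
  intro j v hv
  by_cases hj : j = i
  · subst hj
    rw [Function.update_self] at hv ⊢
    exact hv
  · rw [Function.update_apply, if_neg hj] at hv ⊢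
    exact h j v hv

end Aux

/-- `Γ(f) ≤ 2^n − 1`, witnessed by the function equal to `2^n − 1` on
partial assignments containing a certificate and to `Σ_{i=1}^{w(b)} 2^{n−i}` otherwise. -/
theorem stmt16 {n : ℕ} (f : (Fin n → Bool) → Bool) :
    GoalFn f
      (fun b => if IsCert f b then 2 ^ n - 1 else ∑ i ∈ Finset.Icc 1 (wt b), 2 ^ (n - i))
      (2 ^ n - 1) ∧
    gamma f ≤ 2 ^ n - 1 := by
  -- Rewrite g in closed form: g b = 2^n - 2^(n - R b), R b = n if cert, else wt b.
  have key : ∀ b : Fin n → Option Bool,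
      (if IsCert f b then 2 ^ n - 1 else ∑ i ∈ Finset.Icc 1 (wt b), 2 ^ (n - i))
        = 2 ^ n - 2 ^ (n - (if IsCert f b then n else wt b)) := by
    intro b
    by_cases hb : IsCert f b
    · simp [hb]
    · rw [if_neg hb, if_neg hb]
      exact Sval n (wt b) (wt_le b)
  have R_le : ∀ b : Fin n → Option Bool, (if IsCert f b then n else wt b) ≤ n := by
    intro b
    split
    · exact le_rfl
    · exact wt_le b
  have E_le : ∀ b : Fin n → Option Bool,
      2 ^ (n - (if IsCert f b then n else wt b)) ≤ 2 ^ n :=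
    fun b => Nat.pow_le_pow_right (by norm_num) (by omega)
  have R_mono : ∀ b b' : Fin n → Option Bool, Extends b' b →
      (if IsCert f b then n else wt b) ≤ (if IsCert f b' then n else wt b') := by
    intro b b' h
    by_cases hb : IsCert f b
    · rw [if_pos hb, if_pos (cert_mono hb h)]
    · rw [if_neg hb]
      split
      · exact wt_le b
      · exact wt_mono h
  have E_mono : ∀ b b' : Fin n → Option Bool, Extends b' b →
      2 ^ (n - (if IsCert f b' then n else wt b'))
        ≤ 2 ^ (n - (if IsCert f b then n else wt b)) := by
    intro b b' h
    exact Nat.pow_le_pow_right (by norm_num) (Nat.sub_le_sub_left (R_mono b b' h) n)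
  have hGoal : GoalFn f
      (fun b => if IsCert f b then 2 ^ n - 1 else ∑ i ∈ Finset.Icc 1 (wt b), 2 ^ (n - i))
      (2 ^ n - 1) := by
    refine ⟨?_, ?_, ?_⟩
    · -- Mono
      intro b b' h
      simp only
      rw [key b, key b']
      exact Nat.sub_le_sub_left (E_mono b b' h) _
    · -- Submod
      intro b b' i ℓ hExt hbi hb'i
      simp only
      rw [key, key, key, key]
      have hb' := E_le b'
      have hb := E_le b
      have hub := E_le (Function.update b i (some ℓ))
      have hub' := E_le (Function.update b' i (some ℓ))
      have hEE : 2 ^ (n - (if IsCert f (Function.update b i (some ℓ)) then n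
              else wt (Function.update b i (some ℓ))))
            + 2 ^ (n - (if IsCert f b' then n else wt b'))
          ≤ 2 ^ (n - (if IsCert f (Function.update b' i (some ℓ)) then n
              else wt (Function.update b' i (some ℓ))))
            + 2 ^ (n - (if IsCert f b then n else wt b)) := by
        have hwb : wt b < n := wt_lt hbi
        have hwb' : wt b' < n := wt_lt hb'i
        have hww' : wt b ≤ wt b' := wt_mono hExt
        by_cases hcub : IsCert f (Function.update b i (some ℓ))
        · -- update b is a certificate, hence so is update b'
          have hcub' : IsCert f (Function.update b' i (some ℓ)) :=
            cert_mono hcub (extends_update_update hExt ℓ)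
          rw [if_pos hcub, if_pos hcub']
          have := E_mono b b' hExt
          omega
        · -- update b is not a certificate, hence neither is b
          have hcb : ¬ IsCert f b := fun hc => hcub (cert_mono hc (update_extends hbi ℓ))
          rw [if_neg hcub, if_neg hcb, wt_update hbi]
          have hdb : 2 ^ (n - wt b) = 2 * 2 ^ (n - (wt b + 1)) := by
            rw [← pow_succ']
            congr 1
            omega
          by_cases hcb' : IsCert f b'
          · -- b' certificate ⇒ update b' certificate
            have hcub' : IsCert f (Function.update b' i (some ℓ)) :=
              cert_mono hcb' (update_extends hb'i ℓ)
            rw [if_pos hcb', if_pos hcub']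
            have h1 : (1 : ℕ) ≤ 2 ^ (n - (wt b + 1)) := Nat.one_le_two_pow
            omega
          · rw [if_neg hcb']
            by_cases hcub' : IsCert f (Function.update b' i (some ℓ))
            · rw [if_pos hcub']
              -- then wt b < wt b', for otherwise b' = b and update b' = update b
              have hlt : wt b < wt b' := by
                rcases lt_or_eq_of_le hww' with h | h
                · exact h
                · exfalso
                  have : b' = b := eq_of_ext_wt hExt (le_of_eq h.symm)
                  rw [this] at hcub'
                  exact hcub hcub'
              have h2 : 2 ^ (n - wt b') ≤ 2 ^ (n - (wt b + 1)) :=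
                Nat.pow_le_pow_right (by norm_num) (by omega)
              have h0 : n - n = 0 := Nat.sub_self n
              rw [h0, pow_zero]
              omega
            · rw [if_neg hcub', wt_update hb'i]
              have hdb' : 2 ^ (n - wt b') = 2 * 2 ^ (n - (wt b' + 1)) := by
                rw [← pow_succ']
                congr 1
                omega
              have h2 : 2 ^ (n - (wt b' + 1)) ≤ 2 ^ (n - (wt b + 1)) :=
                Nat.pow_le_pow_right (by norm_num) (by omega)
              omega
      omega
    · -- goal value characterization
      intro b
      simp only
      constructor
      · intro h
        by_contra hb
        rw [if_neg hb, Sval n (wt b) (wt_le b)] at h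
        have hw : wt b < n := lt_of_le_of_ne (wt_le b) (fun he => hb (cert_of_total he))
        have h2 : 2 ≤ 2 ^ (n - wt b) := by
          calc (2 : ℕ) = 2 ^ 1 := (pow_one 2).symm
            _ ≤ 2 ^ (n - wt b) := Nat.pow_le_pow_right (by norm_num) (by omega)
        have h3 : 2 ^ (n - wt b) ≤ 2 ^ n := Nat.pow_le_pow_right (by norm_num) (by omega)
        omega
      · intro h
        rw [if_pos h]
  exact ⟨hGoal, Nat.sInf_le ⟨_, hGoal⟩⟩
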